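/- Let $E\subset\mathbb{R}^n$ be nonempty and $\alpha\in\mathbb{R}$ with $\operatorname{dist}(\cdot,E)^{-\alpha}\in A_1$. Then $0\le\alpha\le\Mu(E)$, where $\Mu(E)$ is the Muckenhoupt exponent of $E$. -/

import Mathlib

open MeasureTheory Metric Set

noncomputable section

/-- An axis-parallel half-open cube in `ℝⁿ`, given by its lower corner and side length. -/
structure Cube (n : ℕ) where
  a : EuclideanSpace ℝ (Fin n)
  l : ℝ
  pos : 0 < l

/-- The set of points of a cube. -/
def Cube.set {n : ℕ} (P : Cube n) : Set (EuclideanSpace ℝ (Fin n)) :=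
  {x | ∀ i, P.a i ≤ x i ∧ x i < P.a i + P.l}

/-- A weight: locally integrable and a.e. positive. -/
def IsWeight {n : ℕ} (w : EuclideanSpace ℝ (Fin n) → ℝ) : Prop :=
  LocallyIntegrable w volume ∧ ∀ᵐ x ∂(volume : Measure (EuclideanSpace ℝ (Fin n))), 0 < w x

/-- The `A₁` inequality with constant `C`, over all axis-parallel cubes. -/
def A1With {n : ℕ} (w : EuclideanSpace ℝ (Fin n) → ℝ) (C : ℝ) : Prop :=
  ∀ P : Cube n, (⨍ x in P.set, w x) ≤ C * essInf w (volume.restrict P.set)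

/-- Membership in the Muckenhoupt class `A₁`. -/
def MemA1 {n : ℕ} (w : EuclideanSpace ℝ (Fin n) → ℝ) : Prop :=
  IsWeight w ∧ ∃ C : ℝ, A1With w C

/-- The `A_p` inequality with constant `C`, over all axis-parallel cubes. -/
def ApWith {n : ℕ} (w : EuclideanSpace ℝ (Fin n) → ℝ) (p C : ℝ) : Prop :=
  ∀ P : Cube n,
    (⨍ x in P.set, w x) * (⨍ x in P.set, w x ^ (1 / (1 - p))) ^ (p - 1) ≤ C

/-- Membership in the Muckenhoupt class `A_p`. -/
def MemAp {n : ℕ} (w : EuclideanSpace ℝ (Fin n) → ℝ) (p : ℝ) : Prop :=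
  IsWeight w ∧ ∃ C : ℝ, ApWith w p C

/-- `Q` is a dyadic subcube of `P`. -/
def IsDyadicSubcube {n : ℕ} (P Q : Cube n) : Prop :=
  ∃ (j : ℕ) (k : Fin n → ℕ), (∀ i, k i < 2 ^ j) ∧
    Q.l = P.l / 2 ^ j ∧ ∀ i, Q.a i = P.a i + P.l * k i / 2 ^ j

/-- A cube is `E`-free if it does not meet `E`. -/
def EFree {n : ℕ} (E : Set (EuclideanSpace ℝ (Fin n))) (Q : Cube n) : Prop :=
  Q.set ∩ E = ∅

/-- The measure `|𝓜(P)|` of a largest `E`-free dyadic subcube of `P`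
(`0` if there is none). -/
def maxFree {n : ℕ} (E : Set (EuclideanSpace ℝ (Fin n))) (P : Cube n) : ℝ :=
  sSup {v : ℝ | ∃ Q : Cube n, IsDyadicSubcube P Q ∧ EFree E Q ∧ v = (volume Q.set).toReal}

/-- Weak porosity with constants `c`, `δ`. -/
def WeaklyPorousWith {n : ℕ} (E : Set (EuclideanSpace ℝ (Fin n))) (c δ : ℝ) : Prop :=
  ∀ P : Cube n, ∃ (N : ℕ) (Q : Fin N → Cube n),
    (∀ k, IsDyadicSubcube P (Q k) ∧ EFree E (Q k)) ∧
    (∀ k m, k ≠ m → Disjoint (Q k).set (Q m).set) ∧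
    (∀ k, δ * maxFree E P ≤ (volume (Q k).set).toReal) ∧
    c * (volume P.set).toReal ≤ ∑ k, (volume (Q k).set).toReal

/-- A set is weakly porous if it is weakly porous with some constants `0 < c, δ < 1`. -/
def WeaklyPorous {n : ℕ} (E : Set (EuclideanSpace ℝ (Fin n))) : Prop :=
  ∃ c δ : ℝ, 0 < c ∧ c < 1 ∧ 0 < δ ∧ δ < 1 ∧ WeaklyPorousWith E c δ

/-- Porosity. -/
def Porous {n : ℕ} (E : Set (EuclideanSpace ℝ (Fin n))) : Prop :=
  ∃ c : ℝ, 0 < c ∧ ∀ (x : EuclideanSpace ℝ (Fin n)) (r : ℝ), 0 < r →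
    ∃ y : EuclideanSpace ℝ (Fin n), ball y (c * r) ⊆ ball x r \ E

/-- The distance weight `dist(·,E)^{-α}`. -/
def distw {n : ℕ} (E : Set (EuclideanSpace ℝ (Fin n))) (α : ℝ)
    (x : EuclideanSpace ℝ (Fin n)) : ℝ :=
  infDist x E ^ (-α)

/-- `h_E(B(x,R))`: the supremum of radii `t` of balls contained in `B(x,R) \ E`. -/
def hFree {n : ℕ} (E : Set (EuclideanSpace ℝ (Fin n))) (x : EuclideanSpace ℝ (Fin n))
    (R : ℝ) : ℝ :=
  sSup {t : ℝ | ∃ y ∈ ball x R, ball y t ⊆ ball x R \ E}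

/-- The set of admissible exponents in the definition of the Muckenhoupt exponent. -/
def MuckSet {n : ℕ} (E : Set (EuclideanSpace ℝ (Fin n))) : Set ℝ :=
  {α : ℝ | ∃ C : ℝ, ∀ x ∈ E, ∀ R r : ℝ, 0 < r → r < hFree E x R → hFree E x R ≤ R →
    (volume (thickening r E ∩ ball x R)).toReal ≤
      C * (hFree E x R / r) ^ (-α) * (volume (ball x R)).toReal}

open scoped Classical in
/-- The Muckenhoupt exponent of `E`. -/
def MuckExp {n : ℕ} (E : Set (EuclideanSpace ℝ (Fin n))) : ℝ :=
  if ∀ x ∈ E, ∀ R : ℝ, 0 < R → 0 < hFree E x R then sSup (MuckSet E) else 0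

end

section Aux

open MeasureTheory Metric Set Filter

variable {n : ℕ}

lemma coord_dist_le (z y : EuclideanSpace ℝ (Fin n)) (i : Fin n) :
    |z i - y i| ≤ dist z y := by
  rw [EuclideanSpace.dist_eq]
  have h1 : Real.sqrt (dist (z i) (y i) ^ 2) = |z i - y i| := by
    rw [Real.dist_eq, Real.sqrt_sq_eq_abs, abs_abs]
  rw [← h1]
  apply Real.sqrt_le_sqrt
  exact Finset.single_le_sum (f := fun j => dist (z j) (y j) ^ 2)
    (fun j _ => sq_nonneg _) (Finset.mem_univ i)

lemma cube_measurable (P : Cube n) : MeasurableSet P.set := by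
  have h : P.set = ⋂ i, (fun x : EuclideanSpace ℝ (Fin n) => x i) ⁻¹'
      (Set.Ico (P.a i) (P.a i + P.l)) := by
    ext x; simp [Cube.set, Set.mem_Ico]
  rw [h]
  exact MeasurableSet.iInter fun i =>
    ((EuclideanSpace.proj (𝕜 := ℝ) i).continuous.measurable) measurableSet_Ico

lemma cube_subset_closedBall (P : Cube n) :
    P.set ⊆ closedBall P.a (Real.sqrt n * P.l) := by
  intro z hz
  rw [mem_closedBall, EuclideanSpace.dist_eq]
  have hsum : ∑ i, dist (z i) (P.a i) ^ 2 ≤ (n : ℝ) * P.l ^ 2 := by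
    have hterm : ∀ i ∈ Finset.univ, dist (z i) (P.a i) ^ 2 ≤ P.l ^ 2 := by
      intro i _
      have h1 := (hz i).1
      have h2 := (hz i).2
      rw [Real.dist_eq]
      have habs : |z i - P.a i| ≤ P.l := abs_le.2 ⟨by linarith, by linarith⟩
      exact pow_le_pow_left₀ (abs_nonneg _) habs 2
    calc ∑ i, dist (z i) (P.a i) ^ 2 ≤ ∑ _i : Fin n, P.l ^ 2 := Finset.sum_le_sum hterm
      _ = (n : ℝ) * P.l ^ 2 := by simp [mul_comm]
  calc Real.sqrt (∑ i, dist (z i) (P.a i) ^ 2) ≤ Real.sqrt ((n : ℝ) * P.l ^ 2) :=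
        Real.sqrt_le_sqrt hsum
    _ = Real.sqrt n * P.l := by
        rw [Real.sqrt_mul (Nat.cast_nonneg n), Real.sqrt_sq P.pos.le]

lemma ball_subset_cube {x : EuclideanSpace ℝ (Fin n)} {R : ℝ} (hR : 0 < R) :
    ball x R ⊆ (Cube.mk (WithLp.toLp 2 (fun i => x i - R)) (2*R) (by linarith)).set := by
  intro z hz i
  have h1 : |z i - x i| ≤ dist z x := coord_dist_le z x i
  rw [mem_ball] at hz
  have h2 : |z i - x i| < R := lt_of_le_of_lt h1 hz
  rw [abs_lt] at h2
  constructor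
  · show x i - R ≤ z i; linarith [h2.1]
  · show z i < x i - R + 2*R; linarith [h2.2]

lemma cube_vol_pos (P : Cube n) : 0 < volume P.set := by
  set c : EuclideanSpace ℝ (Fin n) := WithLp.toLp 2 (fun i => P.a i + P.l / 2) with hc
  have hsub : ball c (P.l/2) ⊆ P.set := by
    intro z hz i
    have h1 : |z i - (P.a i + P.l/2)| ≤ dist z c := coord_dist_le z c i
    rw [mem_ball] at hz
    have h2 := lt_of_le_of_lt h1 hz
    rw [abs_lt] at h2
    exact ⟨by linarith [h2.1], by linarith [h2.2]⟩
  exact lt_of_lt_of_le (measure_ball_pos volume _ (by linarith [P.pos])) (measure_mono hsub)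

lemma cube_vol_lt_top (P : Cube n) : volume P.set < ⊤ :=
  lt_of_le_of_lt (measure_mono (cube_subset_closedBall P)) measure_closedBall_lt_top

lemma integrableOn_cube {w : EuclideanSpace ℝ (Fin n) → ℝ}
    (hw : LocallyIntegrable w volume) (P : Cube n) : IntegrableOn w P.set volume :=
  (hw.integrableOn_isCompact (isCompact_closedBall P.a (Real.sqrt n * P.l))).mono_set
    (cube_subset_closedBall P)

lemma essInf_bounds {w : EuclideanSpace ℝ (Fin n) → ℝ} (hw0 : ∀ z, 0 ≤ w z)
    {s T : Set (EuclideanSpace ℝ (Fin n))} (hs : MeasurableSet s) (hT : T ⊆ s)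
    (hTpos : 0 < volume T) {b : ℝ} (hb : ∀ z ∈ T, w z ≤ b) :
    0 ≤ essInf w (volume.restrict s) ∧ essInf w (volume.restrict s) ≤ b := by
  have hfreq : ∃ᶠ z in ae (volume.restrict s), w z ≤ b := by
    intro hcon
    rw [Filter.eventually_iff, mem_ae_iff] at hcon
    have hsub : T ⊆ {z | ¬ w z ≤ b}ᶜ := fun z hz => by
      simp only [Set.mem_compl_iff, Set.mem_setOf_eq, not_not]; exact hb z hz
    have heq : (volume.restrict s) T = volume T := by
      rw [Measure.restrict_apply' hs, Set.inter_eq_self_of_subset_left hT]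
    have hle : (volume.restrict s) T ≤ (volume.restrict s) {z | ¬ w z ≤ b}ᶜ :=
      measure_mono hsub
    rw [heq, hcon] at hle
    exact absurd (le_antisymm hle zero_le) (ne_of_gt hTpos)
  constructor
  · exact Filter.le_liminf_of_le (Filter.IsCoboundedUnder.of_frequently_le hfreq)
      (Filter.Eventually.of_forall fun z => hw0 z)
  · exact Filter.liminf_le_of_frequently_le hfreq
      ⟨0, Filter.eventually_map.2 (Filter.Eventually.of_forall fun z => hw0 z)⟩

lemma average_pos {w : EuclideanSpace ℝ (Fin n) → ℝ} (hw : IsWeight w) (P : Cube n) :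
    0 < ⨍ z in P.set, w z := by
  obtain ⟨hloc, hpos⟩ := hw
  rw [setAverage_eq]
  have hfin := cube_vol_lt_top P
  have hposv := cube_vol_pos P
  have h0 : 0 ≤ᵐ[volume.restrict P.set] w :=
    ae_restrict_of_ae (hpos.mono fun z hz => hz.le)
  have hint : 0 < ∫ z in P.set, w z := by
    rw [setIntegral_pos_iff_support_of_nonneg_ae h0 (integrableOn_cube hloc P)]
    have hnull : volume {z | ¬ 0 < w z} = 0 := ae_iff.1 hpos
    have hdiff : volume (P.set \ Function.support w) = 0 := by
      apply measure_mono_null _ hnull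
      intro z hz
      simp only [Set.mem_setOf_eq, not_lt]
      have : w z = 0 := by
        by_contra hne0
        exact hz.2 hne0
      rw [this]
    have hle : volume P.set ≤ volume (Function.support w ∩ P.set) +
        volume (P.set \ Function.support w) := by
      refine le_trans (measure_mono ?_) (measure_union_le _ _)
      intro z hz
      by_cases hzs : z ∈ Function.support w
      · exact Or.inl ⟨hzs, hz⟩
      · exact Or.inr ⟨hz, hzs⟩
    rw [hdiff, add_zero] at hle
    exact lt_of_lt_of_le hposv hle
  have htr : 0 < (volume P.set).toReal := ENNReal.toReal_pos hposv.ne' hfin.ne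
  rw [smul_eq_mul]
  exact mul_pos (inv_pos.2 htr) hint

end Aux
section Aux2

open MeasureTheory Metric Set Filter

variable {n : ℕ}

lemma distw_nonneg (E : Set (EuclideanSpace ℝ (Fin n))) (α : ℝ)
    (z : EuclideanSpace ℝ (Fin n)) : 0 ≤ distw E α z :=
  Real.rpow_nonneg infDist_nonneg _

lemma alpha_nonneg {E : Set (EuclideanSpace ℝ (Fin n))} (hne : E.Nonempty) {α : ℝ}
    (hA : MemA1 (distw E α)) : 0 ≤ α := by
  by_contra hneg
  push_neg at hneg
  obtain ⟨x₀, hx₀⟩ := hne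
  obtain ⟨hw, C, hA1⟩ := hA
  have hβpos : 0 < -α := by linarith
  set P : Cube n := ⟨x₀, 1, one_pos⟩ with hP
  have hkey : ∀ ε : ℝ, 0 < ε →
      essInf (distw E α) (volume.restrict P.set) ≤ ε ^ (-α) ∧
      0 ≤ essInf (distw E α) (volume.restrict P.set) := by
    intro ε hε
    have hsqrt : (0:ℝ) ≤ Real.sqrt n := Real.sqrt_nonneg n
    have hδpos : (0:ℝ) < min 1 (ε / (Real.sqrt n + 1)) :=
      lt_min one_pos (div_pos hε (by linarith))
    set δ : ℝ := min 1 (ε / (Real.sqrt n + 1)) with hδdef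
    set Q : Cube n := ⟨x₀, δ, hδpos⟩ with hQ
    have hQP : Q.set ⊆ P.set := by
      intro z hz i
      have h1 := (hz i).1
      have h2 := (hz i).2
      have hδ1 : δ ≤ 1 := min_le_left _ _
      exact ⟨h1, by simp only [hP]; linarith⟩
    have hb : ∀ z ∈ Q.set, distw E α z ≤ ε ^ (-α) := by
      intro z hz
      have hdist : dist z x₀ ≤ Real.sqrt n * δ := cube_subset_closedBall Q hz
      have hlt : dist z x₀ < ε := by
        have h2 : δ ≤ ε / (Real.sqrt n + 1) := min_le_right _ _
        have h3 : Real.sqrt n * δ ≤ Real.sqrt n * (ε / (Real.sqrt n + 1)) :=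
          mul_le_mul_of_nonneg_left h2 hsqrt
        have h4 : Real.sqrt n * (ε / (Real.sqrt n + 1)) =
            (Real.sqrt n / (Real.sqrt n + 1)) * ε := by ring
        have h5 : Real.sqrt n / (Real.sqrt n + 1) < 1 :=
          (div_lt_one (by linarith)).2 (by linarith)
        nlinarith
      have hinf : infDist z E < ε := lt_of_le_of_lt (infDist_le_dist_of_mem hx₀) hlt
      show infDist z E ^ (-α) ≤ ε ^ (-α)
      exact Real.rpow_le_rpow infDist_nonneg hinf.le hβpos.le
    exact ⟨(essInf_bounds (distw_nonneg E α) (cube_measurable P) hQP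
        (cube_vol_pos Q) hb).2,
      (essInf_bounds (distw_nonneg E α) (cube_measurable P) hQP
        (cube_vol_pos Q) hb).1⟩
  have hess0 : essInf (distw E α) (volume.restrict P.set) ≤ 0 := by
    by_contra hcon
    push_neg at hcon
    set η := essInf (distw E α) (volume.restrict P.set) with hη
    have hη2 : 0 < η/2 := by linarith
    have hεpos : (0:ℝ) < min (1/2) ((η/2) ^ (1/(-α))) :=
      lt_min (by norm_num) (Real.rpow_pos_of_pos hη2 _)
    set ε : ℝ := min (1/2) ((η/2) ^ (1/(-α))) with hε
    have h1 := (hkey ε hεpos).1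
    have h2 : ε ^ (-α) ≤ η/2 := by
      calc ε ^ (-α) ≤ ((η/2) ^ (1/(-α))) ^ (-α) :=
            Real.rpow_le_rpow hεpos.le (min_le_right _ _) hβpos.le
        _ = (η/2) ^ (1/(-α) * (-α)) := by rw [← Real.rpow_mul hη2.le]
        _ = η/2 := by rw [one_div_mul_cancel hβpos.ne', Real.rpow_one]
    linarith
  have hessge := (hkey 1 one_pos).2
  have hessInf : essInf (distw E α) (volume.restrict P.set) = 0 :=
    le_antisymm hess0 hessge
  have hA1P := hA1 P
  rw [hessInf, mul_zero] at hA1P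
  linarith [average_pos hw P]

lemma hFree_mem_le {E : Set (EuclideanSpace ℝ (Fin n))} (hne : E.Nonempty)
    {x : EuclideanSpace ℝ (Fin n)} {R : ℝ} (hR : 0 < R) :
    ∀ t ∈ {t : ℝ | ∃ y ∈ ball x R, ball y t ⊆ ball x R \ E}, t ≤ R := by
  intro t ht
  obtain ⟨y, hy, hsub⟩ := ht
  rcases le_or_gt t 0 with hle | htpos
  · linarith
  have hyE : y ∉ E := fun hyE => ((hsub (mem_ball_self htpos)).2) hyE
  rcases Nat.eq_zero_or_pos n with hn | hn
  · exfalso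
    subst hn
    obtain ⟨e, he⟩ := hne
    have : y = e := Subsingleton.elim y e
    exact hyE (this ▸ he)
  · set u : EuclideanSpace ℝ (Fin n) := EuclideanSpace.single ⟨0, hn⟩ (1:ℝ) with hu
    have hnu : ‖u‖ = 1 := by rw [hu, EuclideanSpace.norm_single]; norm_num
    apply le_of_forall_lt
    intro s hst
    rcases le_or_gt s 0 with hs | hs
    · linarith
    have h1 : y + s • u ∈ ball y t := by
      rw [mem_ball, dist_self_add_left, norm_smul, hnu, mul_one, Real.norm_eq_abs,
        abs_of_pos hs]
      exact hst
    have h2 : y - s • u ∈ ball y t := by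
      rw [mem_ball, dist_self_sub_left, norm_smul, hnu, mul_one, Real.norm_eq_abs,
        abs_of_pos hs]
      exact hst
    have h3 := (hsub h1).1
    have h4 := (hsub h2).1
    rw [mem_ball] at h3 h4
    have h6 : dist (y + s • u) (y - s • u) = 2*s := by
      rw [dist_eq_norm]
      have he : (y + s • u) - (y - s • u) = (2*s) • u := by
        rw [two_mul, add_smul]; abel
      rw [he, norm_smul, hnu, mul_one, Real.norm_eq_abs, abs_of_pos (by linarith)]
    have h5 : dist (y + s • u) (y - s • u) ≤
        dist (y + s • u) x + dist x (y - s • u) := dist_triangle _ _ _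
    rw [dist_comm x (y - s • u)] at h5
    rw [h6] at h5
    linarith

lemma hFree_le {E : Set (EuclideanSpace ℝ (Fin n))} (hne : E.Nonempty)
    {x : EuclideanSpace ℝ (Fin n)} {R : ℝ} (hR : 0 < R) : hFree E x R ≤ R :=
  Real.sSup_le (hFree_mem_le hne hR) hR.le

lemma exists_free_ball {E : Set (EuclideanSpace ℝ (Fin n))} (hne : E.Nonempty)
    {x : EuclideanSpace ℝ (Fin n)} {R : ℝ} (hR : 0 < R) (hpos : 0 < hFree E x R) :
    ∃ t, hFree E x R / 2 < t ∧ 0 < t ∧ ∃ y ∈ ball x R, ball y t ⊆ ball x R \ E := by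
  have hSne : {t : ℝ | ∃ y ∈ ball x R, ball y t ⊆ ball x R \ E}.Nonempty := by
    by_contra hcon
    rw [Set.not_nonempty_iff_eq_empty] at hcon
    rw [hFree, hcon, Real.sSup_empty] at hpos
    exact lt_irrefl _ hpos
  obtain ⟨t, htS, htgt⟩ := exists_lt_of_lt_csSup hSne
    (show hFree E x R / 2 < sSup {t : ℝ | ∃ y ∈ ball x R, ball y t ⊆ ball x R \ E} by
      rw [← hFree]; linarith)
  exact ⟨t, htgt, by linarith [htgt, hpos], htS⟩

lemma hFree_pos {E : Set (EuclideanSpace ℝ (Fin n))} (hne : E.Nonempty) {α : ℝ}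
    (hα : α ≠ 0) (hA : MemA1 (distw E α)) :
    ∀ x ∈ E, ∀ R : ℝ, 0 < R → 0 < hFree E x R := by
  intro x hx R hR
  by_contra hcon
  push_neg at hcon
  have hdense : ∀ z ∈ ball x R, infDist z E = 0 := by
    intro z hz
    by_contra hd
    have hd' : 0 < infDist z E := (infDist_nonneg).lt_of_ne (Ne.symm hd)
    have hzR : dist z x < R := mem_ball.1 hz
    have htpos : 0 < min (infDist z E) (R - dist z x) := lt_min hd' (by linarith)
    set t := min (infDist z E) (R - dist z x) with hts
    have hsub : ball z t ⊆ ball x R \ E := by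
      intro u hu
      rw [mem_ball] at hu
      constructor
      · rw [mem_ball]
        have := dist_triangle u z x
        have h2 : t ≤ R - dist z x := min_le_right _ _
        linarith
      · intro huE
        have h3 : infDist z E ≤ dist z u := infDist_le_dist_of_mem huE
        have h4 : t ≤ infDist z E := min_le_left _ _
        rw [dist_comm u z] at hu
        linarith
    have hmem : t ∈ {t : ℝ | ∃ y ∈ ball x R, ball y t ⊆ ball x R \ E} := ⟨z, hz, hsub⟩
    have hbdd : BddAbove {t : ℝ | ∃ y ∈ ball x R, ball y t ⊆ ball x R \ E} :=
      ⟨R, fun t' ht' => hFree_mem_le hne hR t' ht'⟩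
    have := le_csSup hbdd hmem
    rw [← hFree] at this
    linarith
  obtain ⟨⟨hloc, hpos⟩, _⟩ := hA
  have hnull : volume {z | ¬ 0 < distw E α z} = 0 := ae_iff.1 hpos
  have hsub : ball x R ⊆ {z | ¬ 0 < distw E α z} := by
    intro z hz
    simp only [Set.mem_setOf_eq, not_lt]
    rw [distw, hdense z hz, Real.zero_rpow (neg_ne_zero.2 hα)]
  exact (measure_ball_pos volume x hR).ne' (measure_mono_null hsub hnull)

end Aux2
section Aux3

open MeasureTheory Metric Set Filter

variable {n : ℕ}

lemma vol_ball_eq [Nontrivial (EuclideanSpace ℝ (Fin n))]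
    (x : EuclideanSpace ℝ (Fin n)) {R : ℝ} (hR : 0 ≤ R) :
    (volume (ball x R)).toReal =
      R ^ n * (volume (ball (0 : EuclideanSpace ℝ (Fin n)) 1)).toReal := by
  rw [Measure.addHaar_ball volume x hR, ENNReal.toReal_mul,
    ENNReal.toReal_ofReal (pow_nonneg hR _), finrank_euclideanSpace_fin]

lemma vol_closedBall_eq (x : EuclideanSpace ℝ (Fin n)) {R : ℝ} (hR : 0 ≤ R) :
    (volume (closedBall x R)).toReal =
      R ^ n * (volume (ball (0 : EuclideanSpace ℝ (Fin n)) 1)).toReal := by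
  rw [Measure.addHaar_closedBall volume x hR, ENNReal.toReal_mul,
    ENNReal.toReal_ofReal (pow_nonneg hR _), finrank_euclideanSpace_fin]

end Aux3
section Aux4

open MeasureTheory Metric Set Filter

variable {n : ℕ}

lemma mem_muckSet {E : Set (EuclideanSpace ℝ (Fin n))} (hne : E.Nonempty) {α : ℝ}
    (hα : 0 < α) (hA : MemA1 (distw E α)) : α ∈ MuckSet E := by
  obtain ⟨hWeight, C, hA1⟩ := hA
  refine ⟨max C 0 * 4 ^ α * (2 * Real.sqrt n) ^ n, ?_⟩
  intro x hx R r hr hrh hhR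
  set h₀ := hFree E x R with hh₀
  have hh₀pos : 0 < h₀ := lt_trans hr hrh
  have hR : 0 < R := lt_of_lt_of_le hh₀pos hhR
  obtain ⟨t, htgt, htpos, y, hy, hsub⟩ := exists_free_ball hne hR hh₀pos
  haveI : Nontrivial (EuclideanSpace ℝ (Fin n)) :=
    ⟨⟨y, x, fun hh => ((hsub (mem_ball_self htpos)).2) (hh ▸ hx)⟩⟩
  set Q : Cube n := ⟨WithLp.toLp 2 (fun i => x i - R), 2*R, by linarith⟩ with hQ
  have hQball : ball x R ⊆ Q.set := ball_subset_cube hR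
  have hw0 : ∀ z, 0 ≤ distw E α z := distw_nonneg E α
  have hball2 : ball y (t/2) ⊆ Q.set := fun z hz =>
    hQball ((hsub (ball_subset_ball (by linarith) hz)).1)
  -- essInf bounds
  have hwb : ∀ z ∈ ball y (t/2), distw E α z ≤ (t/2) ^ (-α) := by
    intro z hz
    have hid : t/2 ≤ infDist z E := by
      have hd : ∀ e ∈ E, t/2 ≤ dist z e := by
        intro e he
        have hey : e ∉ ball y t := fun hmem => (hsub hmem).2 he
        rw [mem_ball] at hey
        push_neg at hey
        rw [mem_ball] at hz
        have htri : dist e y ≤ dist e z + dist z y := dist_triangle _ _ _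
        rw [dist_comm e z] at htri
        linarith
      have h1 : ENNReal.ofReal (t/2) ≤ Metric.infEDist z E := by
        rw [Metric.le_infEDist]
        intro e he
        rw [edist_dist]
        exact ENNReal.ofReal_le_ofReal (hd e he)
      calc t/2 = (ENNReal.ofReal (t/2)).toReal := by
            rw [ENNReal.toReal_ofReal (by linarith)]
        _ ≤ (Metric.infEDist z E).toReal :=
            ENNReal.toReal_mono (Metric.infEdist_ne_top hne) h1
    exact Real.rpow_le_rpow_of_nonpos (by linarith) hid (neg_nonpos.2 hα.le)
  have hess := essInf_bounds hw0 (cube_measurable Q) hball2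
    (measure_ball_pos volume y (by linarith)) hwb
  have havg : (⨍ z in Q.set, distw E α z) ≤ max C 0 * (t/2) ^ (-α) := by
    calc (⨍ z in Q.set, distw E α z) ≤ C * essInf (distw E α) (volume.restrict Q.set) :=
          hA1 Q
      _ ≤ max C 0 * essInf (distw E α) (volume.restrict Q.set) :=
          mul_le_mul_of_nonneg_right (le_max_left _ _) hess.1
      _ ≤ max C 0 * ((t/2) ^ (-α)) := mul_le_mul_of_nonneg_left hess.2 (le_max_right _ _)
  -- integral chain
  set T₀ := thickening r E ∩ ball x R with hT₀
  have hT₀sub : T₀ ⊆ Q.set := fun z hz => hQball hz.2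
  have hT₀fin : volume T₀ < ⊤ :=
    lt_of_le_of_lt (measure_mono inter_subset_right) measure_ball_lt_top
  have hT₀meas : MeasurableSet T₀ := (isOpen_thickening.inter isOpen_ball).measurableSet
  have hintQ : IntegrableOn (distw E α) Q.set volume := integrableOn_cube hWeight.1 Q
  have hlow : r ^ (-α) * (volume T₀).toReal ≤ ∫ z in T₀, distw E α z := by
    have hconst : ∫ _z in T₀, r ^ (-α) ∂volume = (volume T₀).toReal * r ^ (-α) := by
      rw [setIntegral_const, smul_eq_mul]; rfl
    have hmono : ∫ _z in T₀, r ^ (-α) ∂volume ≤ ∫ z in T₀, distw E α z := by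
      apply integral_mono_ae
      · exact integrableOn_const hT₀fin.ne
      · exact hintQ.mono_set hT₀sub
      · rw [Filter.EventuallyLE, ae_restrict_iff' hT₀meas]
        filter_upwards [hWeight.2] with z hz hzT
        have hinfpos : 0 < infDist z E := by
          by_contra hc
          push_neg at hc
          have h0 : infDist z E = 0 := le_antisymm hc infDist_nonneg
          rw [distw, h0, Real.zero_rpow (neg_ne_zero.2 hα.ne')] at hz
          exact lt_irrefl _ hz
        have hlt : infDist z E < r := (mem_thickening_iff_infDist_lt hne).1 hzT.1
        exact Real.rpow_le_rpow_of_nonpos hinfpos hlt.le (neg_nonpos.2 hα.le)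
    calc r ^ (-α) * (volume T₀).toReal = ∫ _z in T₀, r ^ (-α) ∂volume := by
          rw [hconst]; ring
      _ ≤ ∫ z in T₀, distw E α z := hmono
  have hup : ∫ z in T₀, distw E α z ≤ ∫ z in Q.set, distw E α z :=
    setIntegral_mono_set hintQ (Filter.Eventually.of_forall fun z => hw0 z)
      (HasSubset.Subset.eventuallyLE hT₀sub)
  have hQvol_pos : 0 < (volume Q.set).toReal :=
    ENNReal.toReal_pos (cube_vol_pos Q).ne' (cube_vol_lt_top Q).ne
  have hIQ : ∫ z in Q.set, distw E α z =
      (volume Q.set).toReal * ⨍ z in Q.set, distw E α z := by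
    rw [setAverage_eq, smul_eq_mul, ← mul_assoc, show volume.real Q.set = (volume Q.set).toReal from rfl, mul_inv_cancel₀ hQvol_pos.ne', one_mul]
  have hmain : r ^ (-α) * (volume T₀).toReal ≤
      (volume Q.set).toReal * (max C 0 * (t/2) ^ (-α)) := by
    calc r ^ (-α) * (volume T₀).toReal ≤ ∫ z in T₀, distw E α z := hlow
      _ ≤ ∫ z in Q.set, distw E α z := hup
      _ = (volume Q.set).toReal * ⨍ z in Q.set, distw E α z := hIQ
      _ ≤ _ := mul_le_mul_of_nonneg_left havg hQvol_pos.le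
  -- volume comparison
  set vb := (volume (ball (0 : EuclideanSpace ℝ (Fin n)) 1)).toReal with hvb
  have hQle : (volume Q.set).toReal ≤ (2*Real.sqrt n)^n * (volume (ball x R)).toReal := by
    have h1 : volume Q.set ≤ volume (closedBall Q.a (Real.sqrt n * (2*R))) :=
      measure_mono (cube_subset_closedBall Q)
    have h2 : (volume Q.set).toReal ≤
        (volume (closedBall Q.a (Real.sqrt n * (2*R)))).toReal :=
      ENNReal.toReal_mono measure_closedBall_lt_top.ne h1
    have h3 : Real.sqrt n * (2*R) = (2*Real.sqrt n)*R := by ring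
    rw [h3, vol_closedBall_eq Q.a (by positivity)] at h2
    calc (volume Q.set).toReal ≤ ((2*Real.sqrt n)*R)^n * vb := h2
      _ = (2*Real.sqrt n)^n * (R^n * vb) := by rw [mul_pow]; ring
      _ = (2*Real.sqrt n)^n * (volume (ball x R)).toReal := by rw [vol_ball_eq x hR.le]
  -- final algebra
  have hr_cancel : r ^ α * r ^ (-α) = 1 := by
    rw [← Real.rpow_add hr]; simp
  have hS1 : (volume T₀).toReal ≤
      r ^ α * ((volume Q.set).toReal * (max C 0 * (t/2) ^ (-α))) := by
    have hm := mul_le_mul_of_nonneg_left hmain (Real.rpow_nonneg hr.le α)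
    calc (volume T₀).toReal = r ^ α * (r ^ (-α) * (volume T₀).toReal) := by
          rw [← mul_assoc, hr_cancel, one_mul]
      _ ≤ _ := hm
  have ht2 : (t/2:ℝ) ^ (-α) ≤ (h₀/4) ^ (-α) :=
    Real.rpow_le_rpow_of_nonpos (by linarith) (by linarith) (neg_nonpos.2 hα.le)
  have hid : r ^ α * (h₀/4) ^ (-α) = 4 ^ α * (h₀/r) ^ (-α) := by
    have hne4 : ((4:ℝ) ^ α) ≠ 0 := (Real.rpow_pos_of_pos (by norm_num) α).ne'
    have hneh : (h₀ ^ α) ≠ 0 := (Real.rpow_pos_of_pos hh₀pos α).ne'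
    have hner : (r ^ α) ≠ 0 := (Real.rpow_pos_of_pos hr α).ne'
    rw [Real.rpow_neg (by positivity), Real.rpow_neg (by positivity),
      Real.div_rpow hh₀pos.le (by norm_num : (0:ℝ) ≤ 4), Real.div_rpow hh₀pos.le hr.le]
    field_simp
  have hS2 : (volume T₀).toReal ≤
      r ^ α * ((volume Q.set).toReal * (max C 0 * (h₀/4) ^ (-α))) := by
    refine le_trans hS1 ?_
    apply mul_le_mul_of_nonneg_left _ (Real.rpow_nonneg hr.le α)
    apply mul_le_mul_of_nonneg_left _ hQvol_pos.le
    exact mul_le_mul_of_nonneg_left ht2 (le_max_right C 0)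
  have hS3 : (volume T₀).toReal ≤
      4 ^ α * (h₀/r) ^ (-α) * (max C 0) * (volume Q.set).toReal := by
    calc (volume T₀).toReal ≤
        r ^ α * ((volume Q.set).toReal * (max C 0 * (h₀/4) ^ (-α))) := hS2
      _ = (r ^ α * (h₀/4) ^ (-α)) * (max C 0) * (volume Q.set).toReal := by ring
      _ = 4 ^ α * (h₀/r) ^ (-α) * (max C 0) * (volume Q.set).toReal := by rw [hid]
  have hfac : (0:ℝ) ≤ 4 ^ α * (h₀/r) ^ (-α) * (max C 0) := by
    have := Real.rpow_nonneg (show (0:ℝ) ≤ 4 by norm_num) α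
    have := Real.rpow_nonneg (show (0:ℝ) ≤ h₀/r by positivity) (-α)
    positivity
  calc (volume T₀).toReal ≤
      4 ^ α * (h₀/r) ^ (-α) * (max C 0) * (volume Q.set).toReal := hS3
    _ ≤ 4 ^ α * (h₀/r) ^ (-α) * (max C 0) *
        ((2*Real.sqrt n)^n * (volume (ball x R)).toReal) :=
      mul_le_mul_of_nonneg_left hQle hfac
    _ = max C 0 * 4 ^ α * (2*Real.sqrt n)^n * (h₀/r) ^ (-α) *
        (volume (ball x R)).toReal := by ring

end Aux4
section Aux5

open MeasureTheory Metric Set Filter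

variable {n : ℕ}

lemma zero_mem_muckSet {E : Set (EuclideanSpace ℝ (Fin n))} : (0:ℝ) ∈ MuckSet E := by
  refine ⟨1, fun x hx R r hr hrh hhR => ?_⟩
  simp only [neg_zero, Real.rpow_zero, one_mul, mul_one]
  exact ENNReal.toReal_mono measure_ball_lt_top.ne (measure_mono inter_subset_right)

lemma muckSet_bddAbove {E : Set (EuclideanSpace ℝ (Fin n))} (hne : E.Nonempty)
    (guard : ∀ x ∈ E, ∀ R : ℝ, 0 < R → 0 < hFree E x R) :
    BddAbove (MuckSet E) := by
  obtain ⟨x, hx⟩ := hne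
  have hpos := guard x hx 1 one_pos
  set h₀ := hFree E x 1 with hh₀
  have hle : h₀ ≤ 1 := hFree_le ⟨x, hx⟩ one_pos
  obtain ⟨t, htgt, htpos, y, hy, hsub⟩ := exists_free_ball ⟨x, hx⟩ one_pos hpos
  haveI : Nontrivial (EuclideanSpace ℝ (Fin n)) :=
    ⟨⟨y, x, fun hh => ((hsub (mem_ball_self htpos)).2) (hh ▸ hx)⟩⟩
  refine ⟨n, fun β hβ => ?_⟩
  by_contra hcon
  push_neg at hcon
  obtain ⟨C, hC⟩ := hβ
  set vb := (volume (ball (0 : EuclideanSpace ℝ (Fin n)) 1)).toReal with hvb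
  have hvbpos : 0 < vb :=
    ENNReal.toReal_pos (measure_ball_pos volume _ one_pos).ne' measure_ball_lt_top.ne
  have hγpos : 0 < β - (n:ℝ) := by linarith
  have key : ∀ r : ℝ, 0 < r → r < h₀ → h₀ ^ β ≤ C * r ^ (β - (n:ℝ)) := by
    intro r hr hrh
    have hr1 : r < 1 := lt_of_lt_of_le hrh hle
    have hCineq := hC x hx 1 r hr hrh hle
    have hball : ball x r ⊆ thickening r E ∩ ball x 1 := by
      intro z hz
      refine ⟨?_, ball_subset_ball hr1.le hz⟩
      rw [mem_thickening_iff]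
      exact ⟨x, hx, hz⟩
    have hvolr : (volume (ball x r)).toReal ≤
        (volume (thickening r E ∩ ball x 1)).toReal :=
      ENNReal.toReal_mono
        (lt_of_le_of_lt (measure_mono inter_subset_right) measure_ball_lt_top).ne
        (measure_mono hball)
    rw [vol_ball_eq x hr.le] at hvolr
    have hv1 : (volume (ball x 1)).toReal = vb := by
      rw [vol_ball_eq x zero_le_one]; simp [hvb]
    rw [hv1] at hCineq
    have h1 : r^n * vb ≤ C * (h₀/r) ^ (-β) * vb := le_trans hvolr hCineq
    have h2 : r^n ≤ C * (h₀/r) ^ (-β) := le_of_mul_le_mul_right h1 hvbpos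
    have h3 : (h₀/r) ^ (-β) = r ^ β / h₀ ^ β := by
      rw [Real.rpow_neg (by positivity), Real.div_rpow hpos.le hr.le, inv_div]
    rw [h3] at h2
    have hrn : r ^ n = r ^ ((n:ℕ):ℝ) := (Real.rpow_natCast r n).symm
    rw [hrn] at h2
    have hh₀β : 0 < h₀ ^ β := Real.rpow_pos_of_pos hpos β
    have hrn_pos : 0 < r ^ ((n:ℕ):ℝ) := Real.rpow_pos_of_pos hr _
    have h4 : r ^ β = r ^ ((n:ℕ):ℝ) * r ^ (β - (n:ℝ)) := by
      rw [← Real.rpow_add hr]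
      congr 1
      push_cast
      ring
    have h5 : r ^ ((n:ℕ):ℝ) * h₀ ^ β ≤ C * r ^ β := by
      have hm := mul_le_mul_of_nonneg_right h2 hh₀β.le
      rwa [mul_assoc, div_mul_cancel₀ _ hh₀β.ne'] at hm
    rw [h4] at h5
    have h7 : r ^ ((n:ℕ):ℝ) * (h₀ ^ β) ≤ r ^ ((n:ℕ):ℝ) * (C * r ^ (β - (n:ℝ))) := by
      calc r ^ ((n:ℕ):ℝ) * (h₀ ^ β) ≤ C * (r ^ ((n:ℕ):ℝ) * r ^ (β - (n:ℝ))) := h5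
        _ = r ^ ((n:ℕ):ℝ) * (C * r ^ (β - (n:ℝ))) := by ring
    exact le_of_mul_le_mul_left h7 hrn_pos
  have hh₀β : 0 < h₀ ^ β := Real.rpow_pos_of_pos hpos β
  have hCpos : 0 < C := by
    have hk := key (h₀/2) (by linarith) (by linarith)
    have hrγ : 0 < (h₀/2) ^ (β - (n:ℝ)) := Real.rpow_pos_of_pos (by linarith) _
    nlinarith
  have hMpos : 0 < h₀ ^ β / C := div_pos hh₀β hCpos
  set M := h₀ ^ β / C with hM
  have hrpos : (0:ℝ) < min (h₀/2) ((M/2) ^ (1/(β - (n:ℝ)))) :=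
    lt_min (by linarith) (Real.rpow_pos_of_pos (by linarith) _)
  set r := min (h₀/2) ((M/2) ^ (1/(β - (n:ℝ)))) with hr
  have hrh : r < h₀ := lt_of_le_of_lt (min_le_left _ _) (by linarith)
  have hkey := key r hrpos hrh
  have hrγ : r ^ (β - (n:ℝ)) ≤ M/2 := by
    calc r ^ (β - (n:ℝ)) ≤ ((M/2) ^ (1/(β - (n:ℝ)))) ^ (β - (n:ℝ)) :=
          Real.rpow_le_rpow hrpos.le (min_le_right _ _) hγpos.le
      _ = (M/2) ^ (1/(β - (n:ℝ)) * (β - (n:ℝ))) := by rw [← Real.rpow_mul (by linarith)]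
      _ = M/2 := by rw [one_div_mul_cancel hγpos.ne', Real.rpow_one]
  have h8 : C * r ^ (β - (n:ℝ)) ≤ C * (M/2) := mul_le_mul_of_nonneg_left hrγ hCpos.le
  have h9 : C * (M/2) = h₀ ^ β / 2 := by rw [hM]; field_simp
  nlinarith

end Aux5
/-- If `dist(·,E)^{-α} ∈ A₁` then `0 ≤ α ≤ Mu(E)`. -/
theorem a1_exponent_le_muckExp {n : ℕ} (E : Set (EuclideanSpace ℝ (Fin n)))
    (hne : E.Nonempty) (α : ℝ) (h : MemA1 (distw E α)) :
    0 ≤ α ∧ α ≤ MuckExp E := by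
  have h0 : 0 ≤ α := alpha_nonneg hne h
  refine ⟨h0, ?_⟩
  rcases eq_or_lt_of_le h0 with heq | hαpos
  · rw [← heq]
    unfold MuckExp
    split_ifs with hguard
    · by_cases hb : BddAbove (MuckSet E)
      · exact le_csSup hb zero_mem_muckSet
      · rw [Real.sSup_of_not_bddAbove hb]
    · exact le_refl 0
  · have hguard := hFree_pos hne (ne_of_gt hαpos) h
    unfold MuckExp
    rw [if_pos hguard]
    exact le_csSup (muckSet_bddAbove hne hguard) (mem_muckSet hne hαpos h)
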